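/- The polynomials f_n = Σ_{k=0}^{⌊n/2⌋} (−1)^k q^{k²} [n−k choose k]_q ∈ ℤ[q] satisfy f_0 = 1, f_1 = 1, and the second-order recurrence f_{n+2} = f_{n+1} − q^{n+1} f_n for all n ≥ 0. -/

import Mathlib

/-- The Gaussian (q-)binomial coefficient `[n choose k]_q ∈ ℤ[q]`, defined through the
q-Pascal recurrence `[n+1 choose k+1] = [n choose k] + q^{k+1} [n choose k+1]`. -/
noncomputable def qBinom : ℕ → ℕ → Polynomial ℤ
  | _, 0 => 1
  | 0, _ + 1 => 0
  | n + 1, k + 1 => qBinom n k + Polynomial.X ^ (k + 1) * qBinom n (k + 1)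

/-- `f_n = ∑_{k=0}^{⌊n/2⌋} (-1)^k q^{k²} [n-k choose k]_q ∈ ℤ[q]`. -/
noncomputable def fPoly (n : ℕ) : Polynomial ℤ :=
  ∑ k ∈ Finset.range (n / 2 + 1),
    (-1) ^ k * Polynomial.X ^ (k ^ 2) * qBinom (n - k) k

theorem qBinom_zero (n : ℕ) : qBinom n 0 = 1 := by cases n <;> simp [qBinom]

theorem qBinom_of_lt : ∀ n k : ℕ, n < k → qBinom n k = 0 := by
  intro n
  induction n with
  | zero => intro k h; cases k with
    | zero => omega
    | succ j => simp [qBinom]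
  | succ n ih =>
    intro k h
    cases k with
    | zero => omega
    | succ j =>
      simp only [qBinom, ih j (by omega), ih (j+1) (by omega), mul_zero, add_zero]

theorem fPoly_ext (n N : ℕ) (hN : n / 2 + 1 ≤ N) :
    fPoly n = ∑ k ∈ Finset.range N,
      (-1) ^ k * Polynomial.X ^ (k ^ 2) * qBinom (n - k) k := by
  rw [fPoly]
  apply Finset.sum_subset (Finset.range_subset_range.2 hN)
  intro k _ hk
  rw [Finset.mem_range, not_lt] at hk
  rw [qBinom_of_lt (n - k) k (by omega), mul_zero]

theorem qBinom_succ (n k : ℕ) : qBinom (n+1) (k+1) =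
    qBinom n k + Polynomial.X ^ (k + 1) * qBinom n (k + 1) := rfl

theorem pascal2 : ∀ n k : ℕ, qBinom (n+1) (k+1) =
    Polynomial.X ^ (n - k) * qBinom n k + qBinom n (k+1) := by
  intro n
  induction n with
  | zero =>
    intro k
    cases k with
    | zero => simp [qBinom]
    | succ j => simp [qBinom]
  | succ n ih =>
    intro k
    cases k with
    | zero =>
      have e1 := ih 0
      have e2 := qBinom_succ n 0
      rw [qBinom_succ (n+1) 0]
      simp only [qBinom_zero, Nat.sub_zero] at e1 e2 ⊢
      linear_combination Polynomial.X * e1 - e2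
    | succ j =>
      rw [qBinom_succ (n+1) (j+1)]
      rcases le_or_gt (j+1) n with h | h
      · have i1 := ih j
        have i2 := ih (j+1)
        have d1 := qBinom_succ n j
        have d1' := qBinom_succ n (j+1)
        rw [show n - j = (n - (j+1)) + 1 from by omega] at i1
        rw [show n + 1 - (j+1) = (n - (j+1)) + 1 from by omega]
        linear_combination i1 + Polynomial.X ^ (j+2) * i2 -
          Polynomial.X ^ ((n - (j+1)) + 1) * d1 - d1'
      · rw [qBinom_of_lt (n+1) (j+2) (by omega),
          show n + 1 - (j+1) = 0 from by omega]
        ring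

theorem fPoly_recurrence' (n : ℕ) :
    fPoly (n + 2) = fPoly (n + 1) - Polynomial.X ^ (n + 1) * fPoly n := by
  rw [fPoly_ext (n+2) (n+3) (by omega), fPoly_ext (n+1) (n+3) (by omega),
    fPoly_ext n (n+2) (by omega)]
  have key : (∑ k ∈ Finset.range (n+3),
        ((-1) ^ k * Polynomial.X ^ (k ^ 2) * qBinom (n + 2 - k) k -
          (-1) ^ k * Polynomial.X ^ (k ^ 2) * qBinom (n + 1 - k) k)) =
      -(Polynomial.X ^ (n + 1) * ∑ k ∈ Finset.range (n+2),
        (-1) ^ k * Polynomial.X ^ (k ^ 2) * qBinom (n - k) k) := by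
    rw [Finset.sum_range_succ']
    have h0 : ((-1:Polynomial ℤ)) ^ 0 * Polynomial.X ^ (0 ^ 2) * qBinom (n + 2 - 0) 0 -
        (-1) ^ 0 * Polynomial.X ^ (0 ^ 2) * qBinom (n + 1 - 0) 0 = 0 := by
      simp [qBinom_zero]
    rw [h0, add_zero, Finset.mul_sum, ← Finset.sum_neg_distrib]
    apply Finset.sum_congr rfl
    intro j _
    have e2 : n + 2 - (j + 1) = n + 1 - j := by omega
    have e1 : n + 1 - (j + 1) = n - j := by omega
    rw [e2, e1]
    rcases le_or_gt (2 * j) n with h | h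
    · have hp := pascal2 (n - j) j
      rw [show n + 1 - j = (n - j) + 1 from by omega]
      rw [hp]
      rw [show (n - j) - j = n - 2 * j from by omega]
      have hx : Polynomial.X ^ ((j+1)^2) * Polynomial.X ^ (n - 2*j) =
          (Polynomial.X : Polynomial ℤ) ^ (j ^ 2 + (n + 1)) := by
        rw [← pow_add]; congr 1
        have : (j+1)^2 = j^2 + 2*j + 1 := by ring
        omega
      calc (-1:Polynomial ℤ) ^ (j+1) * Polynomial.X ^ ((j+1) ^ 2) *
            (Polynomial.X ^ (n - 2*j) * qBinom (n - j) j + qBinom (n - j) (j+1)) -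
            (-1) ^ (j+1) * Polynomial.X ^ ((j+1) ^ 2) * qBinom (n - j) (j+1)
          = (-1) ^ (j+1) * (Polynomial.X ^ ((j+1) ^ 2) * Polynomial.X ^ (n - 2*j)) *
            qBinom (n - j) j := by ring
        _ = -(Polynomial.X ^ (n + 1) *
            ((-1) ^ j * Polynomial.X ^ (j ^ 2) * qBinom (n - j) j)) := by
          rw [hx, pow_add]; ring
    · rw [qBinom_of_lt (n + 1 - j) (j+1) (by omega),
        qBinom_of_lt (n - j) (j+1) (by omega),
        qBinom_of_lt (n - j) j (by omega)]
      ring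
  rw [Finset.sum_sub_distrib] at key
  linear_combination key

/-- `f_0 = 1`, `f_1 = 1`, and `f_{n+2} = f_{n+1} - q^{n+1} f_n` for all `n ≥ 0`. -/
theorem fPoly_recurrence :
    fPoly 0 = 1 ∧ fPoly 1 = 1 ∧
      ∀ n : ℕ, fPoly (n + 2) = fPoly (n + 1) - Polynomial.X ^ (n + 1) * fPoly n := by
  refine ⟨by simp [fPoly, qBinom], by simp [fPoly, qBinom], fPoly_recurrence'⟩
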